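/- Let I_1 = {i_1 < ... < i_k} be the lexicographically minimal base of a matroid M of rank k on {1,...,n}, with i_1 = 1, and let I_2 = {j_1 < ... < j_k} be the lexicographically minimal base with respect to the shifted order 2 < 3 < ... < n < 1. If I_2 ≠ I_1, then I_2 = (I_1 \ {1}) ∪ {j} for some j ∉ I_1. -/

import Mathlib

/-- The position of `i` in the cyclically shifted linear order
`r <_r r+1 <_r ⋯ <_r n-1 <_r 0 <_r ⋯ <_r r-1` on `Fin n`. -/
def shiftVal (n : ℕ) (r i : Fin n) : ℕ := ((i : ℕ) + n - (r : ℕ)) % n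

/-- `B` is the lexicographically minimal member of `M` with respect to the shifted linear
order `<_r`: for any other `C ∈ M`, the `<_r`-minimal element of the symmetric difference
`B Δ C` lies in `B`. -/
def IsLexMin (n : ℕ) (r : Fin n) (M : Finset (Finset (Fin n))) (B : Finset (Fin n)) : Prop :=
  B ∈ M ∧ ∀ C ∈ M, C ≠ B → ∃ x ∈ B \ C, ∀ y ∈ C \ B, shiftVal n r x < shiftVal n r y

lemma aug {n k : ℕ} {M : Finset (Finset (Fin n))}
    (hcard : ∀ B ∈ M, B.card = k)
    (hex : ∀ I ∈ M, ∀ J ∈ M, ∀ i ∈ I, ∃ j ∈ J, insert j (I.erase i) ∈ M)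
    {B C Iset Jset : Finset (Fin n)} (hB : B ∈ M) (hC : C ∈ M)
    (hIB : Iset ⊆ B) (hJC : Jset ⊆ C) (hJI : Jset.card < Iset.card) :
    ∃ e ∈ Iset, e ∉ Jset ∧ ∃ E ∈ M, insert e Jset ⊆ E := by
  classical
  have hS : C ∈ M.filter (fun D => Jset ⊆ D) := by
    simp only [Finset.mem_filter]; exact ⟨hC, hJC⟩
  obtain ⟨C', hC'mem, hmax⟩ :=
    Finset.exists_max_image (M.filter fun D => Jset ⊆ D) (fun D => (D ∩ B).card) ⟨C, hS⟩
  rw [Finset.mem_filter] at hC'mem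
  obtain ⟨hC'M, hJC'⟩ := hC'mem
  by_cases hinter : ∃ e ∈ C', e ∉ Jset ∧ e ∈ Iset
  · obtain ⟨e, heC', heJ, heI⟩ := hinter
    refine ⟨e, heI, heJ, C', hC'M, ?_⟩
    intro x hx
    rcases Finset.mem_insert.mp hx with rfl | hx
    · exact heC'
    · exact hJC' hx
  push_neg at hinter
  exfalso
  by_cases hsub : ∀ x ∈ C', x ∉ Jset → x ∈ B
  · have h1 : C' \ Jset ⊆ B \ Iset := by
      intro x hx
      rw [Finset.mem_sdiff] at hx ⊢
      exact ⟨hsub x hx.1 hx.2, fun hxI => (hinter x hx.1 hx.2) hxI⟩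
    have hcC' : C'.card = k := hcard _ hC'M
    have hcB : B.card = k := hcard _ hB
    have h2 : (C' \ Jset).card = k - Jset.card := by rw [Finset.card_sdiff_of_subset hJC', hcC']
    have h3 : (B \ Iset).card = k - Iset.card := by rw [Finset.card_sdiff_of_subset hIB, hcB]
    have h4 := Finset.card_le_card h1
    have hIk : Iset.card ≤ k := hcB ▸ Finset.card_le_card hIB
    omega
  push_neg at hsub
  obtain ⟨x, hxC', hxJ, hxB⟩ := hsub
  obtain ⟨j, hjB, hnew⟩ := hex C' hC'M B hB x hxC'
  have hjx : j ≠ x := fun h => hxB (h ▸ hjB)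
  have hjC' : j ∉ C' := by
    intro hjC'
    have heq : insert j (C'.erase x) = C'.erase x :=
      Finset.insert_eq_self.mpr (Finset.mem_erase.mpr ⟨hjx, hjC'⟩)
    have hc1 := hcard _ hnew
    rw [heq, Finset.card_erase_of_mem hxC', hcard _ hC'M] at hc1
    have hpos : 0 < C'.card := Finset.card_pos.mpr ⟨x, hxC'⟩
    rw [hcard _ hC'M] at hpos
    omega
  have hmemS : insert j (C'.erase x) ∈ M.filter (fun D => Jset ⊆ D) := by
    rw [Finset.mem_filter]
    refine ⟨hnew, fun y hy => Finset.mem_insert.mpr (Or.inr (Finset.mem_erase.mpr ⟨?_, hJC' hy⟩))⟩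
    rintro rfl; exact hxJ hy
  have hle := hmax _ hmemS
  have hcomp : (insert j (C'.erase x)) ∩ B = insert j (C' ∩ B) := by
    ext y
    simp only [Finset.mem_inter, Finset.mem_insert, Finset.mem_erase]
    constructor
    · rintro ⟨(rfl | ⟨hyx, hyC'⟩), hyB⟩
      · exact Or.inl rfl
      · exact Or.inr ⟨hyC', hyB⟩
    · rintro (rfl | ⟨hyC', hyB⟩)
      · exact ⟨Or.inl rfl, hjB⟩
      · exact ⟨Or.inr ⟨fun h => hxB (h ▸ hyB), hyC'⟩, hyB⟩
  rw [hcomp] at hle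
  have hjCB : j ∉ C' ∩ B := fun h => hjC' (Finset.mem_inter.mp h).1
  rw [Finset.card_insert_of_notMem hjCB] at hle
  omega

lemma prefix_le {n k : ℕ} {M : Finset (Finset (Fin n))}
    (hcard : ∀ B ∈ M, B.card = k)
    (hex : ∀ I ∈ M, ∀ J ∈ M, ∀ i ∈ I, ∃ j ∈ J, insert j (I.erase i) ∈ M)
    (r : Fin n)
    {B : Finset (Fin n)} (hB : IsLexMin n r M B)
    {P : Finset (Fin n)} (hP : ∀ x ∈ P, ∀ y : Fin n, shiftVal n r y ≤ shiftVal n r x → y ∈ P)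
    {E : Finset (Fin n)} (hE : E ∈ M) : (E ∩ P).card ≤ (B ∩ P).card := by
  by_contra hlt
  push_neg at hlt
  obtain ⟨e, heI, heJ, E', hE'M, hsub⟩ :=
    aug hcard hex hE hB.1 Finset.inter_subset_left Finset.inter_subset_left hlt
  have heP : e ∈ P := (Finset.mem_inter.mp heI).2
  have heB : e ∉ B := fun h => heJ (Finset.mem_inter.mpr ⟨h, heP⟩)
  have heE' : e ∈ E' := hsub (Finset.mem_insert_self _ _)
  have hne : E' ≠ B := fun h => heB (h ▸ heE')
  obtain ⟨u, huBE', hu⟩ := hB.2 E' hE'M hne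
  rw [Finset.mem_sdiff] at huBE'
  have huP : u ∉ P := by
    intro huP
    exact huBE'.2 (hsub (Finset.mem_insert_of_mem (Finset.mem_inter.mpr ⟨huBE'.1, huP⟩)))
  have hlt2 : shiftVal n r u < shiftVal n r e :=
    hu e (Finset.mem_sdiff.mpr ⟨heE', heB⟩)
  exact huP (hP e heP u (le_of_lt hlt2))

/-- Let `I₁` be the lexicographically minimal base of a rank-`k` matroid `M` on `Fin n`
(standard order, starting at `0`), with `0 ∈ I₁`, and let `I₂` be the lexicographically
minimal base with respect to the shifted order starting at `1`.  If `I₂ ≠ I₁` then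
`I₂ = (I₁ \ {0}) ∪ {j}` for some `j ∉ I₁`. -/
theorem lexmin_base_shift (n k : ℕ) [NeZero n] (M : Finset (Finset (Fin n)))
    (hne : M.Nonempty) (hcard : ∀ B ∈ M, B.card = k)
    (hex : ∀ I ∈ M, ∀ J ∈ M, ∀ i ∈ I, ∃ j ∈ J, insert j (I.erase i) ∈ M)
    (I₁ I₂ : Finset (Fin n))
    (h1 : IsLexMin n 0 M I₁) (h2 : IsLexMin n 1 M I₂)
    (h0 : (0 : Fin n) ∈ I₁) (h12 : I₂ ≠ I₁) :
    ∃ j : Fin n, j ∉ I₁ ∧ I₂ = insert j (I₁.erase 0) := by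
  classical
  have hB : I₁ ∈ M := h1.1
  have hC : I₂ ∈ M := h2.1
  have hkB : I₁.card = k := hcard _ hB
  have hkC : I₂.card = k := hcard _ hC
  -- dispose of n = 1
  by_cases hn1 : n = 1
  · exfalso
    apply h12
    subst hn1
    apply Finset.eq_of_subset_of_card_le
    · intro x hx
      have hx0 : x = 0 := Subsingleton.elim x 0
      rwa [hx0]
    · omega
  have hn2 : 2 ≤ n := by
    have := Nat.pos_of_ne_zero (NeZero.ne n); omega
  -- basic value facts
  have hval0 : ∀ x : Fin n, shiftVal n 0 x = x.val := by
    intro x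
    unfold shiftVal
    rw [Fin.val_zero, Nat.sub_zero, Nat.add_mod_right, Nat.mod_eq_of_lt x.isLt]
  have hval1 : ((1 : Fin n) : ℕ) = 1 := by
    rw [Fin.val_one', Nat.mod_eq_of_lt (by omega)]
  have hvpos : ∀ x : Fin n, x ≠ 0 → 1 ≤ x.val := by
    intro x hx
    rcases Nat.eq_zero_or_pos x.val with h | h
    · exact absurd (Fin.ext (h.trans (Fin.val_zero n).symm)) hx
    · exact h
  have hs0 : shiftVal n 1 0 = n - 1 := by
    unfold shiftVal
    rw [Fin.val_zero, hval1, Nat.zero_add, Nat.mod_eq_of_lt (by omega)]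
  have hs1 : ∀ x : Fin n, x ≠ 0 → shiftVal n 1 x = x.val - 1 := by
    intro x hx
    have h1x := hvpos x hx
    unfold shiftVal
    rw [hval1]
    have : x.val + n - 1 = (x.val - 1) + n := by omega
    rw [this, Nat.add_mod_right, Nat.mod_eq_of_lt (by have := x.isLt; omega)]
  -- Step 1 : 0 ∉ I₂
  have h0C : (0 : Fin n) ∉ I₂ := by
    intro h0C
    obtain ⟨b, hb, hbmin⟩ := h1.2 I₂ hC h12
    obtain ⟨c, hcm, hcmin⟩ := h2.2 I₁ hB (Ne.symm h12)
    rw [Finset.mem_sdiff] at hb hcm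
    have hbne : b ≠ 0 := fun h => hb.2 (h ▸ h0C)
    have hcne : c ≠ 0 := fun h => hcm.2 (h ▸ h0)
    have h1' := hbmin c (Finset.mem_sdiff.mpr ⟨hcm.1, hcm.2⟩)
    have h2' := hcmin b (Finset.mem_sdiff.mpr ⟨hb.1, hb.2⟩)
    rw [hval0, hval0] at h1'
    rw [hs1 c hcne, hs1 b hbne] at h2'
    have := hvpos b hbne
    have := hvpos c hcne
    omega
  -- Step 2 : either conclusion or pick a bad z
  by_cases hall : ∀ x ∈ I₁, x ≠ 0 → x ∈ I₂
  · have hsub : I₁.erase 0 ⊆ I₂ := by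
      intro x hx
      rw [Finset.mem_erase] at hx
      exact hall x hx.2 hx.1
    have hce : (I₁.erase 0).card = k - 1 := by
      rw [Finset.card_erase_of_mem h0, hkB]
    have hkpos : 1 ≤ k := by
      rw [← hkB]; exact Finset.card_pos.mpr ⟨0, h0⟩
    have hcd : (I₂ \ I₁.erase 0).card = 1 := by
      rw [Finset.card_sdiff_of_subset hsub, hkC, hce]; omega
    obtain ⟨j, hj⟩ := Finset.card_eq_one.mp hcd
    have hjmem : j ∈ I₂ \ I₁.erase 0 := hj ▸ Finset.mem_singleton_self j
    rw [Finset.mem_sdiff] at hjmem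
    refine ⟨j, ?_, ?_⟩
    · intro hjB
      exact hjmem.2 (Finset.mem_erase.mpr ⟨fun h => h0C (h ▸ hjmem.1), hjB⟩)
    · have hu := Finset.sdiff_union_of_subset hsub
      rw [hj] at hu
      rw [Finset.insert_eq]
      exact hu.symm
  · exfalso
    push_neg at hall
    obtain ⟨z, hzB, hz0, hzC⟩ := hall
    have hz1 := hvpos z hz0
    have hzn := z.isLt
    set Q : Finset (Fin n) := Finset.univ.filter (fun x => 0 < x.val ∧ x.val < z.val) with hQ
    set Qz : Finset (Fin n) := Finset.univ.filter (fun x => 0 < x.val ∧ x.val ≤ z.val) with hQz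
    set A : Finset (Fin n) := Finset.univ.filter (fun x => x.val < z.val) with hA
    have hmemQ : ∀ x : Fin n, x ∈ Q ↔ 0 < x.val ∧ x.val < z.val := by
      intro x; simp [hQ]
    have hmemQz : ∀ x : Fin n, x ∈ Qz ↔ 0 < x.val ∧ x.val ≤ z.val := by
      intro x; simp [hQz]
    have hmemA : ∀ x : Fin n, x ∈ A ↔ x.val < z.val := by
      intro x; simp [hA]
    have hPA : ∀ x ∈ A, ∀ y : Fin n, shiftVal n 0 y ≤ shiftVal n 0 x → y ∈ A := by
      intro x hx y hy
      rw [hval0, hval0] at hy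
      rw [hmemA] at hx ⊢
      omega
    have hPQz : ∀ x ∈ Qz, ∀ y : Fin n, shiftVal n 1 y ≤ shiftVal n 1 x → y ∈ Qz := by
      intro x hx y hy
      rw [hmemQz] at hx ⊢
      have hxne : x ≠ 0 := by
        intro h
        rw [h, Fin.val_zero] at hx
        omega
      rcases eq_or_ne y 0 with rfl | hyne
      · exfalso
        rw [hs0, hs1 x hxne] at hy
        have := x.isLt
        omega
      · rw [hs1 x hxne, hs1 y hyne] at hy
        have := hvpos y hyne
        omega
    have hF1C := prefix_le hcard hex 0 h1 hPA hC
    have hF2B := prefix_le hcard hex 1 h2 hPQz hB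
    have e1 : I₂ ∩ A = I₂ ∩ Q := by
      ext x
      simp only [Finset.mem_inter, hmemA, hmemQ]
      constructor
      · rintro ⟨hxC, hxlt⟩
        exact ⟨hxC, hvpos x (fun h => h0C (h ▸ hxC)), hxlt⟩
      · rintro ⟨hxC, _, hxlt⟩; exact ⟨hxC, hxlt⟩
    have e2 : I₁ ∩ A = insert 0 (I₁ ∩ Q) := by
      ext x
      simp only [Finset.mem_inter, Finset.mem_insert, hmemA, hmemQ]
      constructor
      · rintro ⟨hxB, hxlt⟩
        rcases eq_or_ne x 0 with rfl | hne
        · exact Or.inl rfl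
        · exact Or.inr ⟨hxB, hvpos x hne, hxlt⟩
      · rintro (rfl | ⟨hxB, _, hxlt⟩)
        · refine ⟨h0, ?_⟩
          rw [Fin.val_zero]; omega
        · exact ⟨hxB, hxlt⟩
    have e3 : I₂ ∩ Qz = I₂ ∩ Q := by
      ext x
      simp only [Finset.mem_inter, hmemQz, hmemQ]
      constructor
      · rintro ⟨hxC, hpos, hle⟩
        refine ⟨hxC, hpos, lt_of_le_of_ne hle ?_⟩
        intro hxz
        exact hzC ((Fin.ext hxz : x = z) ▸ hxC)
      · rintro ⟨hxC, hpos, hlt⟩; exact ⟨hxC, hpos, le_of_lt hlt⟩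
    have e4 : I₁ ∩ Qz = insert z (I₁ ∩ Q) := by
      ext x
      simp only [Finset.mem_inter, Finset.mem_insert, hmemQz, hmemQ]
      constructor
      · rintro ⟨hxB, hpos, hle⟩
        rcases eq_or_ne x z with rfl | hne
        · exact Or.inl rfl
        · exact Or.inr ⟨hxB, hpos, lt_of_le_of_ne hle (fun h => hne (Fin.ext h))⟩
      · rintro (rfl | ⟨hxB, hpos, hlt⟩)
        · exact ⟨hzB, hz1, le_refl _⟩
        · exact ⟨hxB, hpos, le_of_lt hlt⟩
    have c0Q : (0 : Fin n) ∉ I₁ ∩ Q := by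
      intro h
      have := (Finset.mem_inter.mp h).2
      rw [hmemQ, Fin.val_zero] at this
      omega
    have czQ : z ∉ I₁ ∩ Q := by
      intro h
      have := (Finset.mem_inter.mp h).2
      rw [hmemQ] at this
      omega
    rw [e1] at hF1C
    rw [e3] at hF2B
    rw [e2, Finset.card_insert_of_notMem c0Q] at hF1C
    rw [e4, Finset.card_insert_of_notMem czQ] at hF2B
    -- hF1C : (I₂ ∩ Q).card ≤ (I₁ ∩ Q).card + 1
    -- hF2B : (I₁ ∩ Q).card + 1 ≤ (I₂ ∩ Q).card
    have hIB : insert (0 : Fin n) (insert z (I₁ ∩ Q)) ⊆ I₁ := by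
      intro x hx
      rcases Finset.mem_insert.mp hx with rfl | hx
      · exact h0
      rcases Finset.mem_insert.mp hx with rfl | hx
      · exact hzB
      · exact (Finset.mem_inter.mp hx).1
    have h0notin : (0 : Fin n) ∉ insert z (I₁ ∩ Q) := by
      intro h
      rcases Finset.mem_insert.mp h with h | h
      · exact hz0 h.symm
      · exact c0Q h
    have hIcard : (insert (0 : Fin n) (insert z (I₁ ∩ Q))).card = (I₁ ∩ Q).card + 2 := by
      rw [Finset.card_insert_of_notMem h0notin, Finset.card_insert_of_notMem czQ]
    have hJI : (I₂ ∩ Q).card < (insert (0 : Fin n) (insert z (I₁ ∩ Q))).card := by omega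
    obtain ⟨e, heI, heJ, E, hEM, hsubE⟩ :=
      aug hcard hex hB hC hIB Finset.inter_subset_left hJI
    have hQsubA : ∀ x : Fin n, x ∈ Q → x ∈ A := by
      intro x hx; rw [hmemQ] at hx; rw [hmemA]; omega
    have hQsubQz : ∀ x : Fin n, x ∈ Q → x ∈ Qz := by
      intro x hx; rw [hmemQ] at hx; rw [hmemQz]; omega
    rcases eq_or_ne e 0 with rfl | hene
    · -- contradiction on prefix A
      have h5 : insert (0 : Fin n) (I₂ ∩ Q) ⊆ E ∩ A := by
        intro x hx
        refine Finset.mem_inter.mpr ⟨hsubE hx, ?_⟩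
        rcases Finset.mem_insert.mp hx with rfl | hxJ
        · rw [hmemA, Fin.val_zero]; omega
        · exact hQsubA x (Finset.mem_inter.mp hxJ).2
      have h6 := Finset.card_le_card h5
      rw [Finset.card_insert_of_notMem heJ] at h6
      have h7 := prefix_le hcard hex 0 h1 hPA hEM
      rw [e2, Finset.card_insert_of_notMem c0Q] at h7
      omega
    · -- contradiction on prefix Qz
      have heQz : e ∈ Qz := by
        rcases Finset.mem_insert.mp heI with h | h
        · exact absurd h hene
        rcases Finset.mem_insert.mp h with rfl | h
        · rw [hmemQz]; omega
        · exact hQsubQz e (Finset.mem_inter.mp h).2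
      have h5 : insert e (I₂ ∩ Q) ⊆ E ∩ Qz := by
        intro x hx
        refine Finset.mem_inter.mpr ⟨hsubE hx, ?_⟩
        rcases Finset.mem_insert.mp hx with rfl | hxJ
        · exact heQz
        · exact hQsubQz x (Finset.mem_inter.mp hxJ).2
      have h6 := Finset.card_le_card h5
      rw [Finset.card_insert_of_notMem heJ] at h6
      have h7 := prefix_le hcard hex 1 h2 hPQz hEM
      rw [e3] at h7
      omega
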